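/- Let H be a finite-dimensional real inner product space, S a set of vectors of norm at most 1, ε > 0, and F : ℕ → ℝ with F(n) > 0 for all n. Then for every f ∈ H with ‖f‖ ≤ 1 there exist M : ℕ (bounded by a quantity depending only on F and ε), a decomposition f = f_str + f_psd + f_err, where f_str is a linear combination of at most M elements of S with coefficients in [−M, M], |⟨f_psd, v⟩| ≤ 1/F(M) for all v ∈ S, and ‖f_err‖ ≤ ε. -/

import Mathlib

set_option maxHeartbeats 1000000

open RealInnerProductSpace

namespace Stmt8


noncomputable def seq (F : ℕ → ℝ) : ℕ → ℕ × ℝ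
  | 0 => (1, max 1 (F 1))
  | (k+1) =>
    let p := seq F k
    let n := p.1 + ⌈p.2 ^ 2⌉₊ + ⌈(1 + p.2) ^ ⌈p.2 ^ 2⌉₊⌉₊ + 1
    (n, max p.2 (F n))

noncomputable def NN (F : ℕ → ℝ) (k : ℕ) : ℕ := (seq F k).1
noncomputable def DD (F : ℕ → ℝ) (k : ℕ) : ℝ := (seq F k).2

lemma one_le_DD (F : ℕ → ℝ) : ∀ k, 1 ≤ DD F k
  | 0 => le_max_left _ _
  | (k+1) => le_trans (one_le_DD F k) (le_max_left _ _)

lemma DD_mono_succ (F : ℕ → ℝ) (k : ℕ) : DD F k ≤ DD F (k+1) := le_max_left _ _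

lemma DD_mono (F : ℕ → ℝ) : Monotone (DD F) :=
  monotone_nat_of_le_succ (DD_mono_succ F)

lemma F_le_DD (F : ℕ → ℝ) : ∀ k, F (NN F k) ≤ DD F k
  | 0 => le_max_right _ _
  | (k+1) => le_max_right _ _

lemma NN_succ_ge_count (F : ℕ → ℝ) (k : ℕ) : ⌈DD F k ^ 2⌉₊ ≤ NN F (k+1) := by
  show _ ≤ (seq F (k+1)).1
  simp only [seq, NN, DD]
  omega

lemma NN_succ_ge_coeff (F : ℕ → ℝ) (k : ℕ) :
    ⌈(1 + DD F k) ^ ⌈DD F k ^ 2⌉₊⌉₊ ≤ NN F (k+1) := by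
  show _ ≤ (seq F (k+1)).1
  simp only [seq, NN, DD]
  omega

lemma NN_mono (F : ℕ → ℝ) : Monotone (NN F) := by
  apply monotone_nat_of_le_succ
  intro k
  show _ ≤ (seq F (k+1)).1
  simp only [seq, NN, DD]
  omega




variable {H : Type} [NormedAddCommGroup H] [InnerProductSpace ℝ H] [FiniteDimensional ℝ H]

/-- Pythagoras for a single projection. -/
lemma proj_sq (K : Submodule ℝ H) (x : H) :
    ‖x‖ ^ 2 = ‖(↑(Submodule.orthogonalProjectionOnto K x) : H)‖ ^ 2 + ‖x - ↑(Submodule.orthogonalProjectionOnto K x)‖ ^ 2 := by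
  have h0 : ⟪(↑(Submodule.orthogonalProjectionOnto K x) : H), x - ↑(Submodule.orthogonalProjectionOnto K x)⟫ = 0 :=
    Submodule.inner_right_of_mem_orthogonal (Submodule.orthogonalProjectionOnto K x).2
      (Submodule.sub_starProjection_mem_orthogonal x)
  have := norm_add_sq_real (↑(Submodule.orthogonalProjectionOnto K x) : H) (x - ↑(Submodule.orthogonalProjectionOnto K x))
  rw [h0] at this
  simpa using this

lemma norm_proj_le (K : Submodule ℝ H) (x : H) :
    ‖(↑(Submodule.orthogonalProjectionOnto K x) : H)‖ ≤ ‖x‖ := by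
  nlinarith [proj_sq K x, norm_nonneg (↑(Submodule.orthogonalProjectionOnto K x) : H),
    norm_nonneg (x - (↑(Submodule.orthogonalProjectionOnto K x) : H)), norm_nonneg x]

lemma norm_sub_proj_le (K : Submodule ℝ H) (x : H) :
    ‖x - ↑(Submodule.orthogonalProjectionOnto K x)‖ ≤ ‖x‖ := by
  nlinarith [proj_sq K x, norm_nonneg (↑(Submodule.orthogonalProjectionOnto K x) : H),
    norm_nonneg (x - (↑(Submodule.orthogonalProjectionOnto K x) : H)), norm_nonneg x]

/-- Pythagoras for nested projections. -/
lemma nested_sq (V W : Submodule ℝ H) (h : V ≤ W) (f : H) :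
    ‖(↑(Submodule.orthogonalProjectionOnto W f) : H)‖ ^ 2 =
      ‖(↑(Submodule.orthogonalProjectionOnto V f) : H)‖ ^ 2 +
      ‖(↑(Submodule.orthogonalProjectionOnto W f) : H) - ↑(Submodule.orthogonalProjectionOnto V f)‖ ^ 2 := by
  have key : Submodule.orthogonalProjectionOnto V (↑(Submodule.orthogonalProjectionOnto W f)) = Submodule.orthogonalProjectionOnto V f :=
    Submodule.orthogonalProjectionOnto_starProjection_of_le h f
  have h0 : ⟪(↑(Submodule.orthogonalProjectionOnto V f) : H),
      (↑(Submodule.orthogonalProjectionOnto W f) : H) - ↑(Submodule.orthogonalProjectionOnto V f)⟫ = 0 := by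
    rw [← key]
    exact Submodule.inner_right_of_mem_orthogonal (Submodule.orthogonalProjectionOnto V _).2
      (Submodule.sub_starProjection_mem_orthogonal _)
  have := norm_add_sq_real (↑(Submodule.orthogonalProjectionOnto V f) : H)
    ((↑(Submodule.orthogonalProjectionOnto W f) : H) - ↑(Submodule.orthogonalProjectionOnto V f))
  rw [h0] at this
  simpa using this

/-- Energy increment. -/
lemma energy_inc (V W : Submodule ℝ H) (h : V ≤ W) (f v : H) (hv : v ∈ W) (hv1 : ‖v‖ ≤ 1)
    (δ : ℝ) (hδ : 0 ≤ δ) (hcorr : δ ≤ |⟪f - ↑(Submodule.orthogonalProjectionOnto V f), v⟫|) :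
    ‖(↑(Submodule.orthogonalProjectionOnto V f) : H)‖ ^ 2 + δ ^ 2 ≤
      ‖(↑(Submodule.orthogonalProjectionOnto W f) : H)‖ ^ 2 := by
  set d : H := (↑(Submodule.orthogonalProjectionOnto W f) : H) - ↑(Submodule.orthogonalProjectionOnto V f) with hd
  have h1 : ⟪f - ↑(Submodule.orthogonalProjectionOnto W f), v⟫ = 0 :=
    Submodule.inner_left_of_mem_orthogonal hv (Submodule.sub_starProjection_mem_orthogonal f)
  have h2 : ⟪f - ↑(Submodule.orthogonalProjectionOnto V f), v⟫ = ⟪d, v⟫ := by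
    have : f - ↑(Submodule.orthogonalProjectionOnto V f) = (f - ↑(Submodule.orthogonalProjectionOnto W f)) + d := by
      rw [hd]; abel
    rw [this, inner_add_left, h1, zero_add]
  have h3 : δ ≤ ‖d‖ := by
    rw [h2] at hcorr
    have := abs_real_inner_le_norm d v
    nlinarith [norm_nonneg d]
  have := nested_sq V W h f
  nlinarith



lemma take_append_le {α : Type*} (l₁ l₂ : List α) (i : ℕ) (h : i ≤ l₁.length) :
    (l₁ ++ l₂).take i = l₁.take i := by
  conv_rhs => rw [← List.take_left (l₁ := l₁) (l₂ := l₂)]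
  rw [List.take_take]
  congr 1
  omega


noncomputable def sp (L : List H) : Submodule ℝ H := Submodule.span ℝ {x | x ∈ L}

lemma sp_mono {L L' : List H} (h : ∀ x ∈ L, x ∈ L') : sp L ≤ sp L' :=
  Submodule.span_mono h

lemma norm_sub_proj_le' (K : Submodule ℝ H) (x : H) :
    ‖x - ↑(Submodule.orthogonalProjectionOnto K x)‖ ≤ ‖x‖ := by
  have h0 : ⟪(↑(Submodule.orthogonalProjectionOnto K x) : H), x - ↑(Submodule.orthogonalProjectionOnto K x)⟫ = 0 :=
    Submodule.inner_right_of_mem_orthogonal (Submodule.orthogonalProjectionOnto K x).2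
      (Submodule.sub_starProjection_mem_orthogonal x)
  have h := norm_add_sq_real (↑(Submodule.orthogonalProjectionOnto K x) : H) (x - ↑(Submodule.orthogonalProjectionOnto K x))
  rw [h0] at h
  simp only [add_sub_cancel] at h
  nlinarith [norm_nonneg (↑(Submodule.orthogonalProjectionOnto K x) : H),
    norm_nonneg (x - (↑(Submodule.orthogonalProjectionOnto K x) : H)), norm_nonneg x]

lemma coeff (δ : ℝ) (hδ : 0 < δ) :
    ∀ L : List H, (∀ v ∈ L, ‖v‖ ≤ 1) →
    (∀ i, (h : i < L.length) →
      δ ≤ ‖L.getD i 0 - ↑(Submodule.orthogonalProjectionOnto (sp (L.take i)) (L.getD i 0))‖) →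
    ∀ g ∈ sp L, ∃ c : ℕ → ℝ,
      g = ∑ i ∈ Finset.range L.length, c i • L.getD i 0 ∧
      ∀ i, |c i| ≤ ‖g‖ * (1 + 1/δ) ^ L.length := by
  intro L
  induction L using List.reverseRecOn with
  | nil =>
    intro _ _ g hg
    have : g = 0 := by
      have : sp ([] : List H) = ⊥ := by
        simp [sp, Submodule.span_empty, Set.eq_empty_iff_forall_notMem]
      rw [this] at hg
      simpa using hg
    exact ⟨fun _ => 0, by simp [this], fun i => by simp [this]⟩
  | append_singleton L₀ w IH =>
    intro hmem hsep g hg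
    have hlen : (L₀ ++ [w]).length = L₀.length + 1 := by simp
    set U : Submodule ℝ H := sp L₀ with hU
    -- decompose g
    have hspan : sp (L₀ ++ [w]) = U ⊔ Submodule.span ℝ {w} := by
      rw [hU, sp, sp, ← Submodule.span_union]
      congr 1
      ext x
      simp only [Set.mem_setOf_eq, Set.mem_union, List.mem_append, List.mem_singleton]
      tauto
    rw [hspan] at hg
    obtain ⟨h, hh, u, hu, rfl⟩ := Submodule.mem_sup.mp hg
    obtain ⟨a, rfl⟩ := Submodule.mem_span_singleton.mp hu
    -- the separation of w from U
    have hw_sep : δ ≤ ‖w - ↑(Submodule.orthogonalProjectionOnto U w)‖ := by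
      have h1 := hsep L₀.length (by omega)
      have e1 : (L₀ ++ [w]).getD L₀.length 0 = w := by
        rw [List.getD_eq_getElem _ _ (by omega)]
        simp
      have e2 : (L₀ ++ [w]).take L₀.length = L₀ := List.take_left (l₁ := L₀) (l₂ := [w])
      rwa [e1, e2, ← hU] at h1
    have hδ' : (0:ℝ) < ‖w - ↑(Submodule.orthogonalProjectionOnto U w)‖ := lt_of_lt_of_le hδ hw_sep
    -- |a| bound
    have hPh : (↑(Submodule.orthogonalProjectionOnto U h) : H) = h := by
      rw [← Submodule.starProjection_apply, Submodule.starProjection_eq_self_iff]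
      exact hh
    have hdiff : (h + a • w) - ↑(Submodule.orthogonalProjectionOnto U (h + a • w))
        = a • (w - ↑(Submodule.orthogonalProjectionOnto U w)) := by
      have : (Submodule.orthogonalProjectionOnto U (h + a • w) : H)
          = h + a • ↑(Submodule.orthogonalProjectionOnto U w) := by
        rw [map_add, map_smul]
        push_cast
        rw [hPh]
      rw [this, smul_sub]
      abel
    have hnormeq : ‖(h + a • w) - ↑(Submodule.orthogonalProjectionOnto U (h + a • w))‖
        = |a| * ‖w - ↑(Submodule.orthogonalProjectionOnto U w)‖ := by
      rw [hdiff, norm_smul, Real.norm_eq_abs]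
    have hga : |a| * δ ≤ ‖h + a • w‖ := by
      have h2 := norm_sub_proj_le' U (h + a • w)
      rw [hnormeq] at h2
      nlinarith [abs_nonneg a]
    have ha : |a| ≤ ‖h + a • w‖ / δ := by
      rw [le_div_iff₀ hδ]
      exact hga
    -- norm of h
    have hwnorm : ‖w‖ ≤ 1 := hmem w (by simp)
    have hgnn : (0:ℝ) ≤ ‖h + a • w‖ := norm_nonneg _
    have hh_norm : ‖h‖ ≤ ‖h + a • w‖ * (1 + 1/δ) := by
      have : ‖h‖ ≤ ‖h + a • w‖ + |a| * ‖w‖ := by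
        have := norm_sub_le (h + a • w) (a • w)
        simp only [add_sub_cancel_right] at this
        rw [norm_smul, Real.norm_eq_abs] at this
        linarith
      have h3 : |a| * ‖w‖ ≤ ‖h + a • w‖ / δ := by
        calc |a| * ‖w‖ ≤ |a| * 1 := by
              exact mul_le_mul_of_nonneg_left hwnorm (abs_nonneg a)
          _ = |a| := mul_one _
          _ ≤ _ := ha
        
      have : ‖h‖ ≤ ‖h + a • w‖ + ‖h + a • w‖ / δ := by linarith
      calc ‖h‖ ≤ ‖h + a • w‖ + ‖h + a • w‖ / δ := this
        _ = ‖h + a • w‖ * (1 + 1/δ) := by field_simp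
    -- IH
    have hmem₀ : ∀ v ∈ L₀, ‖v‖ ≤ 1 := fun v hv => hmem v (by simp [hv])
    have hsep₀ : ∀ i, (h : i < L₀.length) →
        δ ≤ ‖L₀.getD i 0 - ↑(Submodule.orthogonalProjectionOnto (sp (L₀.take i)) (L₀.getD i 0))‖ := by
      intro i hi
      have h1 := hsep i (by simp; omega)
      rwa [List.getD_append _ _ _ _ hi, take_append_le _ _ _ (le_of_lt hi)] at h1
    obtain ⟨c₀, hsum₀, hb₀⟩ := IH hmem₀ hsep₀ h hh
    -- assemble
    refine ⟨fun i => if i < L₀.length then c₀ i else a, ?_, ?_⟩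
    · rw [hlen, Finset.sum_range_succ]
      have e1 : ∀ i ∈ Finset.range L₀.length,
          (if i < L₀.length then c₀ i else a) • (L₀ ++ [w]).getD i 0 = c₀ i • L₀.getD i 0 := by
        intro i hi
        rw [Finset.mem_range] at hi
        rw [if_pos hi, List.getD_append _ _ _ _ hi]
      rw [Finset.sum_congr rfl e1, ← hsum₀]
      beta_reduce
      rw [if_neg (lt_irrefl _)]
      have e2 : (L₀ ++ [w]).getD L₀.length 0 = w := by
        rw [List.getD_eq_getElem _ _ (by omega)]
        simp
      rw [e2]
    · intro i
      have hpos : (0:ℝ) ≤ 1 + 1/δ := by positivity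
      have hone : (1:ℝ) ≤ 1 + 1/δ := by
        have : (0:ℝ) < 1/δ := by positivity
        linarith
      rw [hlen]
      by_cases hi : i < L₀.length
      · beta_reduce
        rw [if_pos hi]
        calc |c₀ i| ≤ ‖h‖ * (1 + 1/δ) ^ L₀.length := hb₀ i
          _ ≤ (‖h + a • w‖ * (1 + 1/δ)) * (1 + 1/δ) ^ L₀.length := by
              exact mul_le_mul_of_nonneg_right hh_norm (by positivity)
          _ = ‖h + a • w‖ * (1 + 1/δ) ^ (L₀.length + 1) := by ring
      · beta_reduce
        rw [if_neg hi]
        calc |a| ≤ ‖h + a • w‖ / δ := ha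
          _ = ‖h + a • w‖ * (1/δ) := by ring
          _ ≤ ‖h + a • w‖ * (1 + 1/δ) := by
              apply mul_le_mul_of_nonneg_left _ hgnn
              linarith
          _ ≤ ‖h + a • w‖ * (1 + 1/δ) ^ (L₀.length + 1) := by
              apply mul_le_mul_of_nonneg_left _ hgnn
              calc (1 + 1/δ) = (1 + 1/δ) ^ 1 := (pow_one _).symm
                _ ≤ (1 + 1/δ) ^ (L₀.length + 1) := by
                    exact pow_le_pow_right₀ hone (by omega)




lemma norm_proj_le_one (K : Submodule ℝ H) (f : H) (hf : ‖f‖ ≤ 1) :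
    ‖(↑(Submodule.orthogonalProjectionOnto K f) : H)‖ ^ 2 ≤ 1 := by
  have h := proj_sq K f
  nlinarith [norm_nonneg (f - (↑(Submodule.orthogonalProjectionOnto K f) : H)), norm_nonneg f,
    norm_nonneg (↑(Submodule.orthogonalProjectionOnto K f) : H)]

lemma stage (S : Set H) (hS : ∀ v ∈ S, ‖v‖ ≤ 1) (f : H) (hf : ‖f‖ ≤ 1)
    (δ : ℝ) (hδ : 0 < δ) :
    ∀ n : ℕ, ∀ L : List H,
    (∀ v ∈ L, v ∈ S) →
    (∀ i, i < L.length →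
      δ ≤ ‖L.getD i 0 - ↑(Submodule.orthogonalProjectionOnto (sp (L.take i)) (L.getD i 0))‖) →
    ((L.length : ℝ) * δ^2 ≤ ‖(↑(Submodule.orthogonalProjectionOnto (sp L) f) : H)‖^2) →
    (1 - n * δ^2 ≤ ‖(↑(Submodule.orthogonalProjectionOnto (sp L) f) : H)‖^2) →
    ∃ L' : List H, (∀ x ∈ L, x ∈ L') ∧ (∀ v ∈ L', v ∈ S) ∧
      (∀ i, i < L'.length →
        δ ≤ ‖L'.getD i 0 - ↑(Submodule.orthogonalProjectionOnto (sp (L'.take i)) (L'.getD i 0))‖) ∧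
      ((L'.length : ℝ) * δ^2 ≤ ‖(↑(Submodule.orthogonalProjectionOnto (sp L') f) : H)‖^2) ∧
      ‖(↑(Submodule.orthogonalProjectionOnto (sp L) f) : H)‖^2 ≤
        ‖(↑(Submodule.orthogonalProjectionOnto (sp L') f) : H)‖^2 ∧
      (∀ w ∈ S, |⟪f - ↑(Submodule.orthogonalProjectionOnto (sp L') f), w⟫| ≤ δ) := by
  intro n
  induction n with
  | zero =>
    intro L hmem hsep hcount henergy
    by_cases hps : ∀ w ∈ S, |⟪f - ↑(Submodule.orthogonalProjectionOnto (sp L) f), w⟫| ≤ δ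
    · exact ⟨L, fun x hx => hx, hmem, hsep, hcount, le_refl _, hps⟩
    · exfalso
      push_neg at hps
      obtain ⟨w, hwS, hwc⟩ := hps
      have hVW : sp L ≤ sp (L ++ [w]) := Submodule.span_mono (by intro x hx; simp [hx]; exact Or.inl hx)
      have hwW : w ∈ sp (L ++ [w]) := Submodule.subset_span (by simp)
      have hinc := energy_inc (sp L) (sp (L ++ [w])) hVW f w hwW (hS w hwS) δ hδ.le hwc.le
      have hle1 := norm_proj_le_one (H := H) (sp (L ++ [w])) f hf
      simp only [Nat.cast_zero, zero_mul] at henergy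
      nlinarith
  | succ n IH =>
    intro L hmem hsep hcount henergy
    by_cases hps : ∀ w ∈ S, |⟪f - ↑(Submodule.orthogonalProjectionOnto (sp L) f), w⟫| ≤ δ
    · exact ⟨L, fun x hx => hx, hmem, hsep, hcount, le_refl _, hps⟩
    · push_neg at hps
      obtain ⟨w, hwS, hwc⟩ := hps
      have hVW : sp L ≤ sp (L ++ [w]) := Submodule.span_mono (by intro x hx; simp [hx]; exact Or.inl hx)
      have hwW : w ∈ sp (L ++ [w]) := Submodule.subset_span (by simp)
      have hinc := energy_inc (sp L) (sp (L ++ [w])) hVW f w hwW (hS w hwS) δ hδ.le hwc.le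
      -- separation of the new element
      have hwsep : δ ≤ ‖w - ↑(Submodule.orthogonalProjectionOnto (sp L) w)‖ := by
        set V := sp L
        have h0 : ⟪(↑(Submodule.orthogonalProjectionOnto V w) : H), f - ↑(Submodule.orthogonalProjectionOnto V f)⟫ = 0 :=
          Submodule.inner_right_of_mem_orthogonal (Submodule.orthogonalProjectionOnto V w).2
            (Submodule.sub_starProjection_mem_orthogonal f)
        have hsplit : ⟪f - ↑(Submodule.orthogonalProjectionOnto V f), w⟫
            = ⟪f - ↑(Submodule.orthogonalProjectionOnto V f), w - ↑(Submodule.orthogonalProjectionOnto V w)⟫ := by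
          rw [inner_sub_right]
          rw [real_inner_comm (f - ↑(Submodule.orthogonalProjectionOnto V f)) (↑(Submodule.orthogonalProjectionOnto V w))] at *
          rw [h0]
          ring
        have hCS := abs_real_inner_le_norm (f - (↑(Submodule.orthogonalProjectionOnto V f) : H))
          (w - ↑(Submodule.orthogonalProjectionOnto V w))
        have hf1 : ‖f - (↑(Submodule.orthogonalProjectionOnto V f) : H)‖ ≤ 1 :=
          le_trans (norm_sub_proj_le' V f) hf
        have hwn : (0:ℝ) ≤ ‖w - (↑(Submodule.orthogonalProjectionOnto V w) : H)‖ := norm_nonneg _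
        rw [hsplit] at hwc
        nlinarith
      -- apply IH to L ++ [w]
      have hmem'' : ∀ v ∈ L ++ [w], v ∈ S := by
        intro v hv
        rcases List.mem_append.mp hv with h | h
        · exact hmem v h
        · simp at h; subst h; exact hwS
      have hsep'' : ∀ i, i < (L ++ [w]).length →
          δ ≤ ‖(L ++ [w]).getD i 0 -
            ↑(Submodule.orthogonalProjectionOnto (sp ((L ++ [w]).take i)) ((L ++ [w]).getD i 0))‖ := by
        intro i hi
        simp only [List.length_append, List.length_singleton] at hi
        by_cases h : i < L.length
        · rw [List.getD_append _ _ _ _ h, take_append_le _ _ _ h.le]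
          exact hsep i h
        · have : i = L.length := by omega
          subst this
          have e1 : (L ++ [w]).getD L.length 0 = w := by
            rw [List.getD_eq_getElem _ _ (by simp)]
            simp
          have e2 : (L ++ [w]).take L.length = L := List.take_left (l₁ := L) (l₂ := [w])
          rw [e1, e2]
          exact hwsep
      have hcount'' : ((L ++ [w]).length : ℝ) * δ^2 ≤
          ‖(↑(Submodule.orthogonalProjectionOnto (sp (L ++ [w])) f) : H)‖^2 := by
        have : ((L ++ [w]).length : ℝ) = (L.length : ℝ) + 1 := by
          simp
        rw [this]
        nlinarith
      have henergy'' : 1 - n * δ^2 ≤ ‖(↑(Submodule.orthogonalProjectionOnto (sp (L ++ [w])) f) : H)‖^2 := by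
        push_cast at henergy
        nlinarith
      obtain ⟨L', hsub, h1, h2, h3, h4, h5⟩ := IH (L ++ [w]) hmem'' hsep'' hcount'' henergy''
      refine ⟨L', ?_, h1, h2, h3, ?_, h5⟩
      · intro x hx
        exact hsub x (by simp [hx])
      · nlinarith

end Stmt8

open Stmt8 in
theorem stmt_8 (ε : ℝ) (hε : 0 < ε) (F : ℕ → ℝ) (hF : ∀ n, 0 < F n) :
    ∃ C : ℕ, ∀ (H : Type) [NormedAddCommGroup H] [InnerProductSpace ℝ H]
      [FiniteDimensional ℝ H] (S : Set H), (∀ v ∈ S, ‖v‖ ≤ 1) →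
      ∀ f : H, ‖f‖ ≤ 1 →
        ∃ M : ℕ, M ≤ C ∧
          ∃ (k : ℕ) (c : Fin k → ℝ) (v : Fin k → H) (f_psd f_err : H),
            k ≤ M ∧
            (∀ i, v i ∈ S ∧ |c i| ≤ (M : ℝ)) ∧
            f = (∑ i, c i • v i) + f_psd + f_err ∧
            (∀ w ∈ S, |⟪f_psd, w⟫| ≤ 1 / F M) ∧
            ‖f_err‖ ≤ ε := by
  classical
  set T : ℕ := ⌈(ε⁻¹)^2⌉₊ + 1 with hT
  refine ⟨NN F T, ?_⟩
  intro H _ _ _ S hS f hf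
  have hDD1 : ∀ k, 1 ≤ DD F k := one_le_DD F
  have hDDpos : ∀ k, (0:ℝ) < DD F k := fun k => lt_of_lt_of_le one_pos (hDD1 k)
  set δ : ℕ → ℝ := fun k => (DD F k)⁻¹ with hδdef
  have hδpos : ∀ k, 0 < δ k := fun k => inv_pos.mpr (hDDpos k)
  have hδle1 : ∀ k, δ k ≤ 1 := fun k => by
    rw [hδdef]
    simpa using inv_le_one_of_one_le₀ (hDD1 k)
  have hδanti : ∀ j k, j ≤ k → δ k ≤ δ j := fun j k h => by
    rw [hδdef]
    exact inv_anti₀ (hDDpos j) (DD_mono F h)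
  -- energy
  set E : List H → ℝ := fun L => ‖(↑(Submodule.orthogonalProjectionOnto (sp L) f) : H)‖^2 with hE
  -- the goal statement
  set GOAL : Prop := ∃ M : ℕ, M ≤ NN F T ∧
          ∃ (k : ℕ) (c : Fin k → ℝ) (v : Fin k → H) (f_psd f_err : H),
            k ≤ M ∧
            (∀ i, v i ∈ S ∧ |c i| ≤ (M : ℝ)) ∧
            f = (∑ i, c i • v i) + f_psd + f_err ∧
            (∀ w ∈ S, |⟪f_psd, w⟫| ≤ 1 / F M) ∧
            ‖f_err‖ ≤ ε with hGOAL
  suffices hsuf : GOAL by exact hsuf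
  have main : ∀ j : ℕ, j ≤ T → (GOAL ∨ ∃ L : List H,
      ((∀ v ∈ L, v ∈ S) ∧
       (∀ i, i < L.length →
         δ j ≤ ‖L.getD i 0 - ↑(Submodule.orthogonalProjectionOnto (sp (L.take i)) (L.getD i 0))‖) ∧
       ((L.length : ℝ) * (δ j)^2 ≤ E L)) ∧ (j:ℝ) * ε^2 ≤ E L) := by
    intro j
    induction j with
    | zero =>
      intro _
      right
      refine ⟨[], ⟨by simp, by simp, by simp [hE]; try positivity⟩, by simp only [Nat.cast_zero, zero_mul, hE]; try positivity⟩
    | succ j IHj =>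
      intro hjT
      rcases IHj (by omega) with goal | ⟨L, ⟨hmemL, hsepL, hcountL⟩, hEL⟩
      · exact Or.inl goal
      · -- run stage at level j+1
        have hsepL' : ∀ i, i < L.length →
            δ (j+1) ≤ ‖L.getD i 0 - ↑(Submodule.orthogonalProjectionOnto (sp (L.take i)) (L.getD i 0))‖ :=
          fun i hi => le_trans (hδanti j (j+1) (by omega)) (hsepL i hi)
        have hcountL' : (L.length : ℝ) * (δ (j+1))^2 ≤ E L := by
          refine le_trans ?_ hcountL
          have h1 : (δ (j+1))^2 ≤ (δ j)^2 := by
            have := hδanti j (j+1) (by omega)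
            nlinarith [hδpos (j+1), hδpos j]
          nlinarith [Nat.cast_nonneg (α := ℝ) L.length]
        have henergyL : 1 - (⌈DD F (j+1) ^ 2⌉₊ : ℝ) * (δ (j+1))^2 ≤ E L := by
          have h1 : (DD F (j+1))^2 ≤ (⌈DD F (j+1) ^ 2⌉₊ : ℝ) := Nat.le_ceil _
          have h2 : (δ (j+1))^2 = (DD F (j+1))^(-2 : ℤ) := by
            rw [hδdef]
            simp [zpow_neg, zpow_two]
          have h3 : (DD F (j+1))^2 * (δ (j+1))^2 = 1 := by
            rw [hδdef]
            simp only []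
            rw [← mul_pow, mul_inv_cancel₀ (ne_of_gt (hDDpos (j+1))), one_pow]
          have h4 : 1 ≤ (⌈DD F (j+1) ^ 2⌉₊ : ℝ) * (δ (j+1))^2 := by
            calc (1:ℝ) = (DD F (j+1))^2 * (δ (j+1))^2 := h3.symm
              _ ≤ _ := by nlinarith [sq_nonneg (δ (j+1)), hδpos (j+1)]
          have h5 : (0:ℝ) ≤ E L := by rw [hE]; positivity
          linarith
        obtain ⟨L', hsubL, hmem', hsep', hcount', hmono', hpr'⟩ :=
          stage S hS f hf (δ (j+1)) (hδpos (j+1)) (⌈DD F (j+1) ^ 2⌉₊) L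
            hmemL hsepL' hcountL' henergyL
        by_cases hgap : E L' - E L ≤ ε^2
        · -- construct the decomposition
          left
          rw [hGOAL]
          set M : ℕ := NN F (j+1) with hM
          have hVW : sp L ≤ sp L' := Submodule.span_mono (fun x hx => hsubL x hx)
          -- coefficients
          have hg : (↑(Submodule.orthogonalProjectionOnto (sp L) f) : H) ∈ sp L :=
            (Submodule.orthogonalProjectionOnto (sp L) f).2
          have hgnorm : ‖(↑(Submodule.orthogonalProjectionOnto (sp L) f) : H)‖ ≤ 1 := by
            have := norm_proj_le_one (sp L) f hf
            nlinarith [norm_nonneg (↑(Submodule.orthogonalProjectionOnto (sp L) f) : H)]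
          obtain ⟨c, hcsum, hcb⟩ := coeff (δ j) (hδpos j) L
            (fun v hv => hS v (hmemL v hv)) hsepL _ hg
          -- length bound
          have hlen : L.length ≤ M := by
            have h1 : (L.length : ℝ) * (δ j)^2 ≤ 1 := by
              refine le_trans hcountL ?_
              rw [hE]
              exact norm_proj_le_one (sp L) f hf
            have h2 : (L.length : ℝ) ≤ (DD F j)^2 := by
              have h3 : (DD F j)^2 * (δ j)^2 = 1 := by
                rw [hδdef]; simp only []
                rw [← mul_pow, mul_inv_cancel₀ (ne_of_gt (hDDpos j)), one_pow]
              nlinarith [sq_nonneg (δ j), hδpos j, Nat.cast_nonneg (α := ℝ) L.length]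
            have h4 : L.length ≤ ⌈DD F j ^ 2⌉₊ := by
              exact_mod_cast h2.trans (Nat.le_ceil _)
            exact le_trans h4 (NN_succ_ge_count F j)
          -- coefficient bound
          have hcoef : ∀ i, |c i| ≤ (M:ℝ) := by
            intro i
            have h1 := hcb i
            have hone : (1:ℝ) ≤ 1 + 1/(δ j) := by
              have : (0:ℝ) < 1/(δ j) := by rw [one_div]; exact inv_pos.mpr (hδpos j)
              linarith
            have h2 : (1 + 1/(δ j)) = 1 + DD F j := by
              rw [hδdef]
              simp [one_div]
            have h3 : (1 + 1/(δ j))^L.length ≤ (1 + 1/(δ j))^(⌈DD F j ^ 2⌉₊) := by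
              apply pow_le_pow_right₀ hone
              -- L.length ≤ ⌈DD F j ^ 2⌉₊
              have h1' : (L.length : ℝ) * (δ j)^2 ≤ 1 := by
                refine le_trans hcountL ?_
                rw [hE]
                exact norm_proj_le_one (sp L) f hf
              have h2' : (L.length : ℝ) ≤ (DD F j)^2 := by
                have h3' : (DD F j)^2 * (δ j)^2 = 1 := by
                  rw [hδdef]; simp only []
                  rw [← mul_pow, mul_inv_cancel₀ (ne_of_gt (hDDpos j)), one_pow]
                nlinarith [sq_nonneg (δ j), hδpos j, Nat.cast_nonneg (α := ℝ) L.length]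
              have := Nat.le_ceil ((DD F j)^2)
              exact_mod_cast h2'.trans this
            have h4 : ((1:ℝ) + DD F j)^(⌈DD F j ^ 2⌉₊) ≤ (M:ℝ) := by
              calc ((1:ℝ) + DD F j)^(⌈DD F j ^ 2⌉₊)
                  ≤ (⌈(1 + DD F j) ^ ⌈DD F j ^ 2⌉₊⌉₊ : ℝ) := Nat.le_ceil _
                _ ≤ (M:ℝ) := by exact_mod_cast NN_succ_ge_coeff F j
            calc |c i| ≤ ‖(↑(Submodule.orthogonalProjectionOnto (sp L) f) : H)‖ * (1 + 1/(δ j))^L.length :=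
                  h1
              _ ≤ 1 * (1 + 1/(δ j))^(⌈DD F j ^ 2⌉₊) := by
                  apply mul_le_mul hgnorm h3 (pow_nonneg (le_trans zero_le_one hone) _) (by norm_num)
              _ = (1 + DD F j)^(⌈DD F j ^ 2⌉₊) := by rw [one_mul, h2]
              _ ≤ (M:ℝ) := h4
          refine ⟨M, NN_mono F (by omega : j + 1 ≤ T), L.length,
            (fun i => c (i:ℕ)), (fun i => L.getD (i:ℕ) 0),
            f - ↑(Submodule.orthogonalProjectionOnto (sp L') f),
            (↑(Submodule.orthogonalProjectionOnto (sp L') f) : H) - ↑(Submodule.orthogonalProjectionOnto (sp L) f),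
            hlen, ?_, ?_, ?_, ?_⟩
          · intro i
            constructor
            · beta_reduce
              have hi : (i:ℕ) < L.length := i.2
              have heq : L.getD (i:ℕ) 0 = L[(i:ℕ)] := List.getD_eq_getElem L 0 hi
              rw [heq]
              exact hmemL _ (List.getElem_mem hi)
            · exact hcoef _
          · have hsum : ∑ i : Fin L.length, c (i:ℕ) • L.getD (i:ℕ) 0
                = (↑(Submodule.orthogonalProjectionOnto (sp L) f) : H) := by
              rw [Fin.sum_univ_eq_sum_range (fun i => c i • L.getD i 0) L.length]
              exact hcsum.symm
            rw [hsum]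
            abel
          · intro w hwS
            have h1 := hpr' w hwS
            have h2 : δ (j+1) ≤ 1 / F M := by
              rw [hδdef, one_div]
              exact inv_anti₀ (hF M) (F_le_DD F (j+1))
            exact le_trans h1 h2
          · have h1 := nested_sq (sp L) (sp L') hVW f
            have h2 : ‖(↑(Submodule.orthogonalProjectionOnto (sp L') f) : H)
                - ↑(Submodule.orthogonalProjectionOnto (sp L) f)‖^2 ≤ ε^2 := by
              rw [hE] at hgap
              simp only at hgap
              linarith
            nlinarith [norm_nonneg ((↑(Submodule.orthogonalProjectionOnto (sp L') f) : H)
              - ↑(Submodule.orthogonalProjectionOnto (sp L) f)), hε]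
        · right
          refine ⟨L', ⟨hmem', hsep', hcount'⟩, ?_⟩
          push_neg at hgap
          simp only [hE] at hgap hEL ⊢
          push_cast
          nlinarith
  rcases main T le_rfl with goal | ⟨L, _, hEL⟩
  · exact goal
  · exfalso
    have h1 : E L ≤ 1 := norm_proj_le_one (sp L) f hf
    have h2 : (1:ℝ) + ε^2 ≤ (T:ℝ) * ε^2 := by
      have h3 : (ε⁻¹)^2 ≤ (⌈(ε⁻¹)^2⌉₊ : ℝ) := Nat.le_ceil _
      have h4 : (T:ℝ) = (⌈(ε⁻¹)^2⌉₊ : ℝ) + 1 := by rw [hT]; push_cast; ring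
      have h5 : (ε⁻¹)^2 * ε^2 = 1 := by field_simp
      nlinarith [sq_nonneg ε, hε]
    nlinarith [mul_pos hε hε]
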